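/- Fix n > 3. For each i : Fin n let X_i be the map on states (Fin n → ZMod 2) given by the Wolfram rule 73 local function at i: it replaces y_i by 0 when y_{i−1} = y_{i+1} = 1, replaces y_i by y_i + 1 when y_{i−1} = y_{i+1} = 0, and leaves the state unchanged otherwise. Then for every fair update order ω, the set of periodic points of the SDS map [X, ω] = X_{ω_m} ∘ ⋯ ∘ X_{ω_1} equals N_C, the set of states with no three cyclically consecutive 1s. -/

import Mathlib

namespace Stmt16Aux
open Fin.CommRing

variable {n : ℕ} [NeZero n]

/-- The rule 73 local update map. -/
def step (j : Fin n) (z : Fin n → ZMod 2) : Fin n → ZMod 2 :=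
  if z (j - 1) = 1 ∧ z (j + 1) = 1 then Function.update z j 0
  else if z (j - 1) = 0 ∧ z (j + 1) = 0 then Function.update z j (z j + 1)
  else z

/-- The potential: number of adjacent pairs of 1s. -/
def W (z : Fin n → ZMod 2) : ℕ :=
  (Finset.univ.filter fun p : Fin n => z p = 1 ∧ z (p + 1) = 1).card

lemma two_cases (a : ZMod 2) : a = 0 ∨ a = 1 := by revert a; decide

lemma one_ne_zero' (hn : 3 < n) : (1 : Fin n) ≠ 0 := by
  intro h
  have := congrArg Fin.val h
  rw [Fin.val_one'] at this
  simp at this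
  omega

lemma add_one_ne (hn : 3 < n) (j : Fin n) : j + 1 ≠ j := by
  intro h
  have : (1 : Fin n) = 0 := by
    have := h.trans (add_zero j).symm
    exact add_left_cancel this
  exact one_ne_zero' hn this

lemma sub_one_ne (hn : 3 < n) (j : Fin n) : j - 1 ≠ j := by
  intro h
  have h2 : j - 1 + 1 = j + 1 := by rw [h]
  rw [sub_add_cancel] at h2
  exact add_one_ne hn j h2.symm

lemma W_update_lt (z : Fin n → ZMod 2) (j : Fin n)
    (h1 : z j = 1) (h2 : z (j + 1) = 1) :
    W (Function.update z j 0) < W z := by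
  apply Finset.card_lt_card
  rw [Finset.ssubset_iff_of_subset]
  · refine ⟨j, ?_, ?_⟩
    · simp only [Finset.mem_filter, Finset.mem_univ, true_and]
      exact ⟨h1, h2⟩
    · simp only [Finset.mem_filter, Finset.mem_univ, true_and, not_and]
      intro h
      rw [Function.update_self] at h
      exact absurd h (by decide)
  · intro p hp
    simp only [Finset.mem_filter, Finset.mem_univ, true_and] at hp ⊢
    by_cases hpj : p = j
    · exfalso
      subst hpj
      rw [Function.update_self] at hp
      exact absurd hp.1 (by decide)
    · by_cases hpj' : p + 1 = j
      · exfalso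
        rw [hpj', Function.update_self] at hp
        exact absurd hp.2 (by decide)
      · rw [Function.update_of_ne hpj, Function.update_of_ne hpj'] at hp
        exact hp

lemma step_le (hn : 3 < n) (j : Fin n) (z : Fin n → ZMod 2) :
    W (step j z) ≤ W z := by
  unfold step
  split_ifs with h1 h2
  · rcases two_cases (z j) with h0 | h0
    · rw [show (0 : ZMod 2) = z j from h0.symm, Function.update_eq_self]
    · exact le_of_lt (W_update_lt z j h0 h1.2)
  · apply Finset.card_le_card
    intro p hp
    simp only [Finset.mem_filter, Finset.mem_univ, true_and] at hp ⊢
    by_cases hpj : p = j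
    · exfalso
      subst hpj
      rw [Function.update_of_ne (add_one_ne hn p), h2.2] at hp
      exact absurd hp.2 (by decide)
    · by_cases hpj' : p + 1 = j
      · exfalso
        have hps : p = j - 1 := eq_sub_iff_add_eq.mpr hpj'
        rw [Function.update_of_ne hpj, hps, h2.1] at hp
        exact absurd hp.1 (by decide)
      · rw [Function.update_of_ne hpj, Function.update_of_ne hpj'] at hp
        exact hp
  · exact le_rfl

lemma step_apply_ne (j : Fin n) (z : Fin n → ZMod 2) (p : Fin n) (hpj : p ≠ j) :
    step j z p = z p := by
  unfold step
  split_ifs <;> simp [Function.update_of_ne hpj]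

/-- Either a single step strictly decreases `W`, or (if it is not the update at `i+1`)
it preserves a triple of consecutive 1s at `i`. -/
lemma step_triple (hn : 3 < n) (i j : Fin n) (z : Fin n → ZMod 2)
    (ht : z i = 1 ∧ z (i + 1) = 1 ∧ z (i + 2) = 1) :
    W (step j z) < W z ∨
      (j ≠ i + 1 ∧ (step j z i = 1 ∧ step j z (i + 1) = 1 ∧ step j z (i + 2) = 1)) := by
  by_cases hj1 : j = i + 1
  · subst hj1
    left
    have hg : z (i + 1 - 1) = 1 ∧ z (i + 1 + 1) = 1 := by
      constructor
      · rw [show i + 1 - 1 = i by ring]; exact ht.1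
      · rw [show i + 1 + 1 = i + 2 by ring]; exact ht.2.2
    have hs : step (i + 1) z = Function.update z (i + 1) 0 := by
      unfold step; rw [if_pos hg]
    rw [hs]
    exact W_update_lt z (i + 1) ht.2.1 (by rw [show i + 1 + 1 = i + 2 by ring]; exact ht.2.2)
  · by_cases hj0 : j = i
    · subst hj0
      rcases two_cases (z (j - 1)) with h0 | h0
      · right
        refine ⟨hj1, ?_⟩
        have hs : step j z = z := by
          unfold step
          rw [if_neg (by rw [h0]; rintro ⟨h, -⟩; exact absurd h (by decide)),
            if_neg (by rw [ht.2.1]; rintro ⟨-, h⟩; exact absurd h (by decide))]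
        rw [hs]; exact ht
      · left
        have hs : step j z = Function.update z j 0 := by
          unfold step; rw [if_pos ⟨h0, ht.2.1⟩]
        rw [hs]
        exact W_update_lt z j ht.1 ht.2.1
    · by_cases hj2 : j = i + 2
      · subst hj2
        have hm1 : i + 2 - 1 = i + 1 := by ring
        rcases two_cases (z (i + 2 + 1)) with h0 | h0
        · right
          refine ⟨hj1, ?_⟩
          have hs : step (i + 2) z = z := by
            unfold step
            rw [if_neg (by rw [h0]; rintro ⟨-, h⟩; exact absurd h (by decide)),
              if_neg (by rw [hm1, ht.2.1]; rintro ⟨h, -⟩; exact absurd h (by decide))]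
          rw [hs]; exact ht
        · left
          have hs : step (i + 2) z = Function.update z (i + 2) 0 := by
            unfold step; rw [if_pos ⟨by rw [hm1]; exact ht.2.1, h0⟩]
          rw [hs]
          exact W_update_lt z (i + 2) ht.2.2 h0
      · right
        refine ⟨hj1, ?_, ?_, ?_⟩
        · rw [step_apply_ne j z i (fun h => hj0 h.symm)]; exact ht.1
        · rw [step_apply_ne j z (i + 1) (fun h => hj1 h.symm)]; exact ht.2.1
        · rw [step_apply_ne j z (i + 2) (fun h => hj2 h.symm)]; exact ht.2.2

lemma foldl_le (hn : 3 < n) (L : List (Fin n)) :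
    ∀ z : Fin n → ZMod 2, W (L.foldl (fun s j => step j s) z) ≤ W z := by
  induction L with
  | nil => intro z; exact le_rfl
  | cons j L ih =>
    intro z
    calc W ((j :: L).foldl (fun s j => step j s) z)
        = W (L.foldl (fun s j => step j s) (step j z)) := rfl
      _ ≤ W (step j z) := ih _
      _ ≤ W z := step_le hn j z

lemma foldl_lt (hn : 3 < n) (L : List (Fin n)) :
    ∀ (z : Fin n → ZMod 2) (i : Fin n),
      (z i = 1 ∧ z (i + 1) = 1 ∧ z (i + 2) = 1) → i + 1 ∈ L →
      W (L.foldl (fun s j => step j s) z) < W z := by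
  induction L with
  | nil => intro z i _ hm; exact absurd hm List.not_mem_nil
  | cons j L ih =>
    intro z i ht hm
    rcases step_triple hn i j z ht with h | ⟨hne, ht'⟩
    · calc W ((j :: L).foldl (fun s j => step j s) z)
          = W (L.foldl (fun s j => step j s) (step j z)) := rfl
        _ ≤ W (step j z) := foldl_le hn L _
        _ < W z := h
    · have hm' : i + 1 ∈ L := by
        rcases List.mem_cons.mp hm with h | h
        · exact absurd h.symm hne
        · exact h
      calc W ((j :: L).foldl (fun s j => step j s) z)
          = W (L.foldl (fun s j => step j s) (step j z)) := rfl
        _ < W (step j z) := ih _ i ht' hm'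
        _ ≤ W z := step_le hn j z

/-- States with no three cyclically consecutive 1s. -/
def P (z : Fin n → ZMod 2) : Prop :=
  ∀ i : Fin n, ¬(z i = 1 ∧ z (i + 1) = 1 ∧ z (i + 2) = 1)

lemma guard_zero (hP : P z) (j : Fin n)
    (hg : z (j - 1) = 1 ∧ z (j + 1) = 1) : z j = 0 := by
  rcases two_cases (z j) with h | h
  · exact h
  · exfalso
    apply hP (j - 1)
    refine ⟨hg.1, ?_, ?_⟩
    · rw [show j - 1 + 1 = j by ring]; exact h
    · rw [show j - 1 + 2 = j + 1 by ring]; exact hg.2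

lemma step_P (hn : 3 < n) (z : Fin n → ZMod 2) (hP : P z) (j : Fin n) :
    P (step j z) := by
  unfold step
  split_ifs with h1 h2
  · rw [show (0 : ZMod 2) = z j from (guard_zero hP j h1).symm, Function.update_eq_self]
    exact hP
  · intro i ht
    set z' := Function.update z j (z j + 1) with hz'
    have hzm : z' (j - 1) = 0 := by
      rw [hz', Function.update_of_ne (sub_one_ne hn j), h2.1]
    have hzp : z' (j + 1) = 0 := by
      rw [hz', Function.update_of_ne (add_one_ne hn j), h2.2]
    by_cases hij : i = j
    · subst hij
      rw [hzp] at ht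
      exact absurd ht.2.1 (by decide)
    · by_cases hij1 : i + 1 = j
      · have : i + 2 = j + 1 := by rw [← hij1]; ring
        rw [this, hzp] at ht
        exact absurd ht.2.2 (by decide)
      · by_cases hij2 : i + 2 = j
        · have : i + 1 = j - 1 := by rw [← hij2]; ring
          rw [this, hzm] at ht
          exact absurd ht.2.1 (by decide)
        · apply hP i
          rw [hz', Function.update_of_ne hij, Function.update_of_ne hij1,
            Function.update_of_ne hij2] at ht
          exact ht
  · exact hP

lemma step_invol (hn : 3 < n) (z : Fin n → ZMod 2) (hP : P z) (j : Fin n) :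
    step j (step j z) = z := by
  rcases two_cases (z (j - 1)) with hm | hm <;> rcases two_cases (z (j + 1)) with hp | hp
  · -- both 0 : flip twice
    have hs : step j z = Function.update z j (z j + 1) := by
      unfold step
      rw [if_neg (by rw [hm]; rintro ⟨h, -⟩; exact absurd h (by decide)), if_pos ⟨hm, hp⟩]
    rw [hs]
    set z' := Function.update z j (z j + 1) with hz'
    have hzm : z' (j - 1) = 0 := by
      rw [hz', Function.update_of_ne (sub_one_ne hn j), hm]
    have hzp : z' (j + 1) = 0 := by
      rw [hz', Function.update_of_ne (add_one_ne hn j), hp]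
    have hs2 : step j z' = Function.update z' j (z' j + 1) := by
      unfold step
      rw [if_neg (by rw [hzm]; rintro ⟨h, -⟩; exact absurd h (by decide)), if_pos ⟨hzm, hzp⟩]
    rw [hs2, hz', Function.update_idem, Function.update_self,
      (by decide : ∀ a : ZMod 2, a + 1 + 1 = a) (z j),
      Function.update_eq_self]
  · -- (0,1) : identity
    have hs : step j z = z := by
      unfold step
      rw [if_neg (by rw [hm]; rintro ⟨h, -⟩; exact absurd h (by decide)),
        if_neg (by rw [hp]; rintro ⟨-, h⟩; exact absurd h (by decide))]
    rw [hs, hs]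
  · -- (1,0) : identity
    have hs : step j z = z := by
      unfold step
      rw [if_neg (by rw [hp]; rintro ⟨-, h⟩; exact absurd h (by decide)),
        if_neg (by rw [hm]; rintro ⟨h, -⟩; exact absurd h (by decide))]
    rw [hs, hs]
  · -- (1,1) : z j = 0, identity
    have hs : step j z = z := by
      unfold step
      rw [if_pos ⟨hm, hp⟩, show (0 : ZMod 2) = z j from (guard_zero hP j ⟨hm, hp⟩).symm,
        Function.update_eq_self]
    rw [hs, hs]

lemma foldl_P (hn : 3 < n) (L : List (Fin n)) :
    ∀ z : Fin n → ZMod 2, P z → P (L.foldl (fun s j => step j s) z) := by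
  induction L with
  | nil => intro z hz; exact hz
  | cons j L ih => intro z hz; exact ih _ (step_P hn z hz j)

lemma foldl_inj (hn : 3 < n) (L : List (Fin n)) :
    ∀ z w : Fin n → ZMod 2, P z → P w →
      L.foldl (fun s j => step j s) z = L.foldl (fun s j => step j s) w → z = w := by
  induction L with
  | nil => intro z w _ _ h; exact h
  | cons j L ih =>
    intro z w hz hw h
    have := ih (step j z) (step j w) (step_P hn z hz j) (step_P hn w hw j) h
    calc z = step j (step j z) := (step_invol hn z hz j).symm
      _ = step j (step j w) := by rw [this]
      _ = w := step_invol hn w hw j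

end Stmt16Aux

open Stmt16Aux in
/-- For Wolfram rule 73, the set of periodic points of the SDS map
of any fair update order equals `N_C`, the set of states with no three cyclically
consecutive 1s. -/
theorem stmt_16 {n : ℕ} [NeZero n] (hn : 3 < n)
    (X : Fin n → (Fin n → ZMod 2) → (Fin n → ZMod 2))
    (hX : ∀ (i : Fin n) (y : Fin n → ZMod 2),
      X i y =
        if y (i - 1) = 1 ∧ y (i + 1) = 1 then Function.update y i 0
        else if y (i - 1) = 0 ∧ y (i + 1) = 0 then Function.update y i (y i + 1)
        else y) :
    ∀ ω : List (Fin n), (∀ i : Fin n, i ∈ ω) →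
      {y : Fin n → ZMod 2 | ∃ k : ℕ, 1 ≤ k ∧
          (fun z : Fin n → ZMod 2 => ω.foldl (fun s j => X j s) z)^[k] y = y}
        = {y : Fin n → ZMod 2 |
            ∀ i : Fin n, ¬(y i = 1 ∧ y (i + 1) = 1 ∧ y (i + 2) = 1)} := by
  intro ω hfair
  have hXs : (fun z : Fin n → ZMod 2 => ω.foldl (fun s j => X j s) z)
      = (fun z : Fin n → ZMod 2 => ω.foldl (fun s j => step j s) z) := by
    funext z
    congr 1
    funext s j
    rw [hX]
    rfl
  rw [hXs]
  set F : (Fin n → ZMod 2) → (Fin n → ZMod 2) :=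
    fun z => ω.foldl (fun s j => step j s) z with hF
  have hF_le : ∀ z, W (F z) ≤ W z := fun z => foldl_le hn ω z
  have hFiter_le : ∀ (m : ℕ) (z : Fin n → ZMod 2), W (F^[m] z) ≤ W z := by
    intro m
    induction m with
    | zero => intro z; exact le_rfl
    | succ m ih =>
      intro z
      rw [Function.iterate_succ_apply]
      exact le_trans (ih (F z)) (hF_le z)
  ext y
  simp only [Set.mem_setOf_eq]
  constructor
  · rintro ⟨k, hk1, hky⟩ i hti
    have hlt : W (F y) < W y := foldl_lt hn ω y i hti (hfair (i + 1))
    have hk : F^[k] y = F^[k - 1] (F y) := by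
      conv_lhs => rw [show k = (k - 1) + 1 by omega]
      rw [Function.iterate_succ_apply]
    have : W y ≤ W (F y) := by
      calc W y = W (F^[k] y) := by rw [hky]
        _ = W (F^[k - 1] (F y)) := by rw [hk]
        _ ≤ W (F y) := hFiter_le _ _
    omega
  · intro hy
    have hy' : P y := hy
    haveI : DecidablePred (P (n := n)) := Classical.decPred _
    let S := {z : Fin n → ZMod 2 // P z}
    let F' : S → S := fun x => ⟨F x.1, foldl_P hn ω x.1 x.2⟩
    have hinj : Function.Injective F' := by
      intro a b h
      exact Subtype.ext (foldl_inj hn ω a.1 b.1 a.2 b.2 (congrArg Subtype.val h))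
    have hiter : ∀ (m : ℕ) (x : S), (F'^[m] x).1 = F^[m] x.1 := by
      intro m
      induction m with
      | zero => intro x; rfl
      | succ m ih =>
        intro x
        rw [Function.iterate_succ_apply, Function.iterate_succ_apply]
        exact ih (F' x)
    obtain ⟨a, b, hab, heq⟩ :=
      Finite.exists_ne_map_eq_of_infinite (fun m : ℕ => F'^[m] (⟨y, hy'⟩ : S))
    rcases Nat.lt_or_gt_of_ne hab with hlt | hlt
    · refine ⟨b - a, by omega, ?_⟩
      have : F'^[a] (F'^[b - a] ⟨y, hy'⟩) = F'^[a] ⟨y, hy'⟩ := by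
        rw [← Function.iterate_add_apply, show a + (b - a) = b by omega]
        exact heq.symm
      have h2 : F'^[b - a] (⟨y, hy'⟩ : S) = ⟨y, hy'⟩ := hinj.iterate a this
      have := congrArg Subtype.val h2
      rw [hiter] at this
      exact this
    · refine ⟨a - b, by omega, ?_⟩
      have : F'^[b] (F'^[a - b] ⟨y, hy'⟩) = F'^[b] ⟨y, hy'⟩ := by
        rw [← Function.iterate_add_apply, show b + (a - b) = a by omega]
        exact heq
      have h2 : F'^[a - b] (⟨y, hy'⟩ : S) = ⟨y, hy'⟩ := hinj.iterate b this
      have := congrArg Subtype.val h2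
      rw [hiter] at this
      exact this
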